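/- Let n ≥ 4 be an integer divisible by 4 and set r = n/2 + 1 (so r is odd). Then D¹_{r−1} ⊆ E¹·D¹_r·D¹_{n+1}; that is, every h ∈ D¹ with v_D(h − 1) ≥ n/2 can be written as h = e·g·u with e ∈ E¹ (embedded in D as x_{λ,0} with λ·λ̄ = 1), g ∈ D¹_{n/2+1}, and u ∈ D¹_{n+1}. Consequently (E¹·D¹_{r−1})/D¹_{n+1} = (E¹·D¹_r)/D¹_{n+1}. -/

import Mathlib

noncomputable section
open Matrix

/-- The image of `p` in `E`. -/
def pE (p : ℕ) [Fact p.Prime] (E : Type) [Field E] [Algebra ℚ_[p] E] : E :=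
  algebraMap ℚ_[p] E (p : ℚ_[p])

/-- The ring of integers `O_E = ℤ_p + ℤ_p·α` of the unramified quadratic extension
`E = F(α)`, as a set. -/
def OE (p : ℕ) [Fact p.Prime] (E : Type) [Field E] [Algebra ℚ_[p] E] (α : E) : Set E :=
  {x | ∃ a b : ℤ_[p],
    x = algebraMap ℚ_[p] E (a : ℚ_[p]) + algebraMap ℚ_[p] E (b : ℚ_[p]) * α}

/-- The element `x_{a,b} = !![a, b; p·conj b, conj a]` of the quaternion division algebra
`D ⊆ M₂(E)`. -/
def qmat (p : ℕ) [Fact p.Prime] (E : Type) [Field E] [Algebra ℚ_[p] E]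
    (conj : E → E) (a b : E) : Matrix (Fin 2) (Fin 2) E :=
  !![a, b; pE p E * conj b, conj a]

/-- The uniformizer `δ = x_{0,1}` of `D`, with `δ² = p`. -/
def deltaM (p : ℕ) [Fact p.Prime] (E : Type) [Field E] [Algebra ℚ_[p] E] :
    Matrix (Fin 2) (Fin 2) E :=
  !![0, 1; pE p E, 0]

/-- The maximal order `O_D = {x_{a,b} : a, b ∈ O_E}` of `D`, as a set. -/
def ODset (p : ℕ) [Fact p.Prime] (E : Type) [Field E] [Algebra ℚ_[p] E]
    (α : E) (conj : E → E) : Set (Matrix (Fin 2) (Fin 2) E) :=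
  {m | ∃ a b : E, a ∈ OE p E α ∧ b ∈ OE p E α ∧ m = qmat p E conj a b}

/-- The norm-one group `D¹ = {x ∈ D : det x = 1}`, as a set. -/
def D1set (p : ℕ) [Fact p.Prime] (E : Type) [Field E] [Algebra ℚ_[p] E]
    (conj : E → E) : Set (Matrix (Fin 2) (Fin 2) E) :=
  {m | (∃ a b : E, m = qmat p E conj a b) ∧ m.det = 1}

/-- `vDge p E α conj r m` says `v_D(m) ≥ r`, i.e. `m ∈ δ^r·O_D = P_D^r`. -/
def vDge (p : ℕ) [Fact p.Prime] (E : Type) [Field E] [Algebra ℚ_[p] E]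
    (α : E) (conj : E → E) (r : ℕ) (m : Matrix (Fin 2) (Fin 2) E) : Prop :=
  ∃ yy ∈ ODset p E α conj, m = deltaM p E ^ r * yy

/-- `x ∈ P_E = p·O_E`. -/
def inPE (p : ℕ) [Fact p.Prime] (E : Type) [Field E] [Algebra ℚ_[p] E]
    (α : E) (x : E) : Prop :=
  ∃ c ∈ OE p E α, x = pE p E * c

namespace St10

variable {p : ℕ} [Fact p.Prime] {E : Type} [Field E] [Algebra ℚ_[p] E]

lemma conj_pE (conj : E →ₐ[ℚ_[p]] E) : conj (pE p E) = pE p E := by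
  simp [pE]

lemma qmat0_mul (conj : E →ₐ[ℚ_[p]] E) (a c d : E) :
    qmat p E (⇑conj) a 0 * qmat p E (⇑conj) c d = qmat p E (⇑conj) (a * c) (a * d) := by
  ext i j
  fin_cases i <;> fin_cases j <;>
    simp [qmat, Matrix.mul_apply, Fin.sum_univ_two, _root_.map_mul, _root_.map_zero] <;> ring

lemma delta_mul_qmat (conj : E →ₐ[ℚ_[p]] E) (hinv : ∀ x : E, conj (conj x) = x) (a b : E) :
    deltaM p E * qmat p E (⇑conj) a b
      = qmat p E (⇑conj) (pE p E * conj b) (conj a) := by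
  ext i j
  fin_cases i <;> fin_cases j <;>
    simp [qmat, deltaM, Matrix.mul_apply, Fin.sum_univ_two, _root_.map_mul, conj_pE, hinv] <;> ring

lemma delta_pow_even (k : ℕ) :
    deltaM p E ^ (2 * k) = (pE p E ^ k) • (1 : Matrix (Fin 2) (Fin 2) E) := by
  have h2 : deltaM p E ^ 2 = pE p E • (1 : Matrix (Fin 2) (Fin 2) E) := by
    rw [pow_two]
    ext i j
    fin_cases i <;> fin_cases j <;>
      simp [deltaM, Matrix.mul_apply, Fin.sum_univ_two, Matrix.one_apply]
  rw [pow_mul, h2, smul_pow, one_pow]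

lemma smul_qmat (conj : E →ₐ[ℚ_[p]] E) {c : E} (hc : conj c = c) (a b : E) :
    c • qmat p E (⇑conj) a b = qmat p E (⇑conj) (c * a) (c * b) := by
  ext i j
  fin_cases i <;> fin_cases j <;> simp [qmat, _root_.map_mul, hc] <;> ring

lemma qmat_add_one (conj : E →ₐ[ℚ_[p]] E) (a b : E) :
    qmat p E (⇑conj) a b + 1 = qmat p E (⇑conj) (a + 1) b := by
  ext i j
  fin_cases i <;> fin_cases j <;> simp [qmat, Matrix.one_apply, _root_.map_add, _root_.map_one]

lemma qmat_sub_one (conj : E →ₐ[ℚ_[p]] E) (a b : E) :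
    qmat p E (⇑conj) a b - 1 = qmat p E (⇑conj) (a - 1) b := by
  ext i j
  fin_cases i <;> fin_cases j <;> simp [qmat, Matrix.one_apply, _root_.map_sub, _root_.map_one]

lemma det_qmat (conj : E →ₐ[ℚ_[p]] E) (a b : E) :
    (qmat p E (⇑conj) a b).det = a * conj a - pE p E * (b * conj b) := by
  simp [qmat, Matrix.det_fin_two_of]
  ring

lemma qmat_one (conj : E →ₐ[ℚ_[p]] E) : qmat p E (⇑conj) 1 0 = 1 := by
  ext i j
  fin_cases i <;> fin_cases j <;> simp [qmat, Matrix.one_apply]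

lemma qmat_zero (conj : E →ₐ[ℚ_[p]] E) : qmat p E (⇑conj) 0 0 = 0 := by
  ext i j
  fin_cases i <;> fin_cases j <;> simp [qmat]

variable {α : E}

lemma OE_map (c : ℤ_[p]) : algebraMap ℚ_[p] E (c : ℚ_[p]) ∈ OE p E α :=
  ⟨c, 0, by simp⟩

lemma OE_one : (1 : E) ∈ OE p E α := by simpa using OE_map (α := α) (1 : ℤ_[p])

lemma OE_pE_pow (k : ℕ) : pE p E ^ k ∈ OE p E α := by
  refine ⟨(p:ℤ_[p])^k, 0, ?_⟩
  simp only [PadicInt.coe_pow, PadicInt.coe_natCast, _root_.map_pow, PadicInt.coe_zero,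
    _root_.map_zero, zero_mul, add_zero, pE]

lemma OE_add {x y : E} (hx : x ∈ OE p E α) (hy : y ∈ OE p E α) : x + y ∈ OE p E α := by
  obtain ⟨a, b, rfl⟩ := hx
  obtain ⟨c, d, rfl⟩ := hy
  refine ⟨a + c, b + d, ?_⟩
  simp only [PadicInt.coe_add, _root_.map_add]
  ring

lemma OE_mul {z : ℤ_[p]ˣ} (hα : α * α = algebraMap ℚ_[p] E ((z : ℤ_[p]) : ℚ_[p]))
    {x y : E} (hx : x ∈ OE p E α) (hy : y ∈ OE p E α) : x * y ∈ OE p E α := by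
  obtain ⟨a, b, rfl⟩ := hx
  obtain ⟨c, d, rfl⟩ := hy
  refine ⟨a * c + b * d * z, a * d + b * c, ?_⟩
  simp only [PadicInt.coe_add, PadicInt.coe_mul, _root_.map_add, _root_.map_mul]
  linear_combination (algebraMap ℚ_[p] E (b : ℚ_[p]) * algebraMap ℚ_[p] E (d : ℚ_[p])) * hα

lemma OE_conj (conj : E →ₐ[ℚ_[p]] E) (hconj : conj α = -α)
    {x : E} (hx : x ∈ OE p E α) : conj x ∈ OE p E α := by
  obtain ⟨a, b, rfl⟩ := hx
  refine ⟨a, -b, ?_⟩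
  simp only [PadicInt.coe_neg, _root_.map_add, _root_.map_mul, _root_.map_neg,
    AlgHom.commutes, hconj]
  ring

lemma OE_norm {z : ℤ_[p]ˣ} (hα : α * α = algebraMap ℚ_[p] E ((z : ℤ_[p]) : ℚ_[p]))
    (conj : E →ₐ[ℚ_[p]] E) (hconj : conj α = -α)
    {x : E} (hx : x ∈ OE p E α) : ∃ t : ℤ_[p], x * conj x = algebraMap ℚ_[p] E (t : ℚ_[p]) := by
  obtain ⟨a, b, rfl⟩ := hx
  refine ⟨a * a - b * b * z, ?_⟩
  simp only [PadicInt.coe_sub, PadicInt.coe_mul, _root_.map_add, _root_.map_mul,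
    _root_.map_sub, AlgHom.commutes, hconj]
  linear_combination (-(algebraMap ℚ_[p] E (b : ℚ_[p]) * algebraMap ℚ_[p] E (b : ℚ_[p]))) * hα

lemma conj_invol (conj : E →ₐ[ℚ_[p]] E) (hconj : conj α = -α)
    (hspan : ∀ x : E, ∃ a b : ℚ_[p], x = algebraMap ℚ_[p] E a + algebraMap ℚ_[p] E b * α)
    (x : E) : conj (conj x) = x := by
  obtain ⟨a, b, rfl⟩ := hspan x
  simp [_root_.map_add, _root_.map_mul, AlgHom.commutes, hconj, _root_.map_neg]

end St10

open Polynomial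

lemma st10_two_norm {p : ℕ} [Fact p.Prime] (hp : p ≠ 2) : ‖(2 : ℤ_[p])‖ = 1 := by
  refine le_antisymm (PadicInt.norm_le_one _) (not_lt.1 ?_)
  intro h
  have h2 : ((2:ℤ) : ℤ_[p]) = (2 : ℤ_[p]) := by norm_cast
  rw [← h2, PadicInt.norm_int_lt_one_iff_dvd] at h
  have h3 : p ∣ 2 := by exact_mod_cast h
  exact hp ((Nat.prime_dvd_prime_iff_eq (Fact.out) Nat.prime_two).1 h3)

lemma st10_sqrt {p : ℕ} [Fact p.Prime] (hp : p ≠ 2) (m : ℕ) (hm : 1 ≤ m) (t : ℤ_[p]) :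
    ∃ c : ℤ_[p],
      (1 + (p:ℤ_[p])^m * c) * (1 + (p:ℤ_[p])^m * c) = 1 + (p:ℤ_[p])^m * t := by
  set F : Polynomial ℤ_[p] := X^2 - C (1 + (p:ℤ_[p])^m * t) with hF
  have heval : F.eval 1 = -((p:ℤ_[p])^m * t) := by simp [hF]
  have hde : F.derivative.eval 1 = 2 := by
    simp [hF, derivative_sub, derivative_pow]
  have hsmall : ‖(p:ℤ_[p])^m * t‖ ≤ (p:ℝ)^(-(m:ℤ)) := by
    rw [norm_mul]
    calc ‖(p:ℤ_[p])^m‖ * ‖t‖ ≤ ‖(p:ℤ_[p])^m‖ * 1 :=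
          mul_le_mul_of_nonneg_left (PadicInt.norm_le_one t) (norm_nonneg _)
      _ = (p:ℝ)^(-(m:ℤ)) := by rw [mul_one, PadicInt.norm_p_pow]
  have hplt : (p:ℝ)^(-(m:ℤ)) < 1 := by
    have hp1 : (1:ℝ) < p := by exact_mod_cast (Fact.out : p.Prime).one_lt
    have := zpow_lt_one_of_neg₀ hp1 (by omega : (-(m:ℤ)) < 0)
    exact this
  have hnorm : ‖F.eval 1‖ < ‖F.derivative.eval 1‖^2 := by
    rw [heval, hde, st10_two_norm hp, one_pow, norm_neg]
    exact lt_of_le_of_lt hsmall hplt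
  obtain ⟨zz, hz, hz1, -, -⟩ := hensels_lemma hnorm
  rw [Polynomial.coe_aeval_eq_eval, hde, st10_two_norm hp] at hz1
  have hz2 : zz^2 = 1 + (p:ℤ_[p])^m * t := by
    have : zz^2 - (1 + (p:ℤ_[p])^m * t) = 0 := by simpa [hF] using hz
    exact sub_eq_zero.mp this
  have hzp1 : ‖zz + 1‖ = 1 := by
    have : zz + 1 = zz - 1 + 2 := by ring
    rw [this, PadicInt.norm_add_eq_max_of_ne (by rw [st10_two_norm hp]; exact ne_of_lt hz1),
      st10_two_norm hp]
    exact max_eq_right (le_of_lt hz1)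
  have hnz : ‖zz - 1‖ ≤ (p:ℝ)^(-(m:ℤ)) := by
    have : ‖zz - 1‖ = ‖(zz-1)*(zz+1)‖ := by rw [norm_mul, hzp1, mul_one]
    rw [this]
    have he : (zz-1)*(zz+1) = (p:ℤ_[p])^m * t := by
      have : (zz-1)*(zz+1) = zz^2 - 1 := by ring
      rw [this, hz2]; ring
    rw [he]; exact hsmall
  have hdvd : (p:ℤ_[p])^m ∣ (zz - 1) := by
    have := (PadicInt.norm_le_pow_iff_mem_span_pow (zz-1) m).1 hnz
    rwa [Ideal.mem_span_singleton] at this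
  obtain ⟨c, hc⟩ := hdvd
  have hzz : (1:ℤ_[p]) + (p:ℤ_[p])^m*c = zz := by rw [← hc]; ring
  exact ⟨c, by rw [hzz, ← hz2]; ring⟩


/-- for `4 ∣ n`, `n ≥ 4`, `r = n/2 + 1` (so `r` odd), one has
`D¹_{r-1} ⊆ E¹·D¹_r·D¹_{n+1}`: every `h ∈ D¹` with `v_D(h-1) ≥ n/2` factors as
`h = e·g·u` with `e = x_{λ,0}`, `λ·λ̄ = 1`, `g ∈ D¹_{n/2+1}` and `u ∈ D¹_{n+1}`.
Consequently `(E¹·D¹_{r-1})/D¹_{n+1} = (E¹·D¹_r)/D¹_{n+1}` (both inclusions of cosets). -/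
theorem stmt10 (p : ℕ) [Fact p.Prime] (hp : p ≠ 2)
    (z : ℤ_[p]ˣ) (hz : ¬ ∃ w : ℤ_[p], w * w = (z : ℤ_[p]))
    (E : Type) [Field E] [Algebra ℚ_[p] E] (α : E)
    (hα : α * α = algebraMap ℚ_[p] E ((z : ℤ_[p]) : ℚ_[p]))
    (hα0 : α ∉ Set.range (algebraMap ℚ_[p] E))
    (hspan : ∀ x : E, ∃ a b : ℚ_[p], x = algebraMap ℚ_[p] E a + algebraMap ℚ_[p] E b * α)
    (conj : E →ₐ[ℚ_[p]] E) (hconj : conj α = -α)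
    (n : ℕ) (hn : 4 ≤ n) (hn4 : 4 ∣ n) :
    -- main inclusion D¹_{r-1} ⊆ E¹·D¹_r·D¹_{n+1}, r - 1 = n/2
    (∀ h ∈ D1set p E conj, vDge p E α conj (n / 2) (h - 1) →
      ∃ lam : E, lam * conj lam = 1 ∧
        ∃ g ∈ D1set p E conj, vDge p E α conj (n / 2 + 1) (g - 1) ∧
          ∃ u ∈ D1set p E conj, vDge p E α conj (n + 1) (u - 1) ∧
            h = qmat p E conj lam 0 * g * u) ∧
    -- hence (E¹·D¹_{r-1})/D¹_{n+1} ⊆ (E¹·D¹_r)/D¹_{n+1}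
    (∀ lam0 : E, lam0 * conj lam0 = 1 →
      ∀ h ∈ D1set p E conj, vDge p E α conj (n / 2) (h - 1) →
        ∃ lam : E, lam * conj lam = 1 ∧
          ∃ g ∈ D1set p E conj, vDge p E α conj (n / 2 + 1) (g - 1) ∧
            ∃ u ∈ D1set p E conj, vDge p E α conj (n + 1) (u - 1) ∧
              qmat p E conj lam0 0 * h = qmat p E conj lam 0 * g * u) ∧
    -- and (E¹·D¹_r)/D¹_{n+1} ⊆ (E¹·D¹_{r-1})/D¹_{n+1}
    (∀ lam0 : E, lam0 * conj lam0 = 1 →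
      ∀ g ∈ D1set p E conj, vDge p E α conj (n / 2 + 1) (g - 1) →
        ∃ lam : E, lam * conj lam = 1 ∧
          ∃ h ∈ D1set p E conj, vDge p E α conj (n / 2) (h - 1) ∧
            ∃ u ∈ D1set p E conj, vDge p E α conj (n + 1) (u - 1) ∧
              qmat p E conj lam0 0 * g = qmat p E conj lam 0 * h * u) := by
  have hinv : ∀ x : E, conj (conj x) = x := St10.conj_invol conj hconj hspan
  obtain ⟨k, hk⟩ := hn4
  have hn2 : n / 2 = 2 * k := by omega
  rw [hn2]
  have h1D : (1 : Matrix (Fin 2) (Fin 2) E) ∈ D1set p E (⇑conj) :=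
    ⟨⟨1, 0, (St10.qmat_one conj).symm⟩, Matrix.det_one⟩
  have h0OD : ∀ m : ℕ, vDge p E α (⇑conj) m ((1 : Matrix (Fin 2) (Fin 2) E) - 1) := by
    intro m
    refine ⟨qmat p E (⇑conj) 0 0, ⟨0, 0, ⟨0, 0, by simp⟩, ⟨0, 0, by simp⟩, rfl⟩, ?_⟩
    rw [St10.qmat_zero, mul_zero, sub_self]
  have hpEO : pE p E ∈ OE p E α := by
    have := St10.OE_pE_pow (α := α) (p := p) (E := E) 1
    simpa using this
  have hmain : ∀ h ∈ D1set p E (⇑conj), vDge p E α (⇑conj) (2 * k) (h - 1) →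
      ∃ lam : E, lam * conj lam = 1 ∧
        ∃ g ∈ D1set p E (⇑conj), vDge p E α (⇑conj) (2 * k + 1) (g - 1) ∧
          ∃ u ∈ D1set p E (⇑conj), vDge p E α (⇑conj) (n + 1) (u - 1) ∧
            h = qmat p E (⇑conj) lam 0 * g * u := by
    rintro h ⟨-, hdet⟩ ⟨yy, ⟨a, b, ha, hb, rfl⟩, hy⟩
    set π : E := pE p E ^ k with hπ
    have hconjπ : conj π = π := by rw [hπ, _root_.map_pow, St10.conj_pE]
    rw [sub_eq_iff_eq_add] at hy
    have hy' : h = qmat p E (⇑conj) (π * a + 1) (π * b) := by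
      rw [hy, St10.delta_pow_even, smul_mul_assoc, one_mul,
        St10.smul_qmat conj hconjπ, St10.qmat_add_one]
    set A : E := π * a + 1 with hA
    set B : E := π * b with hB
    have hdet' : A * conj A - pE p E * (B * conj B) = 1 := by
      rw [hy', St10.det_qmat] at hdet
      exact hdet
    obtain ⟨t, ht⟩ := St10.OE_norm hα conj hconj hb
    have hBB : B * conj B = pE p E ^ (2 * k) * algebraMap ℚ_[p] E (t : ℚ_[p]) := by
      rw [hB, _root_.map_mul, hconjπ, ← ht, hπ]
      ring
    obtain ⟨c, hc⟩ := st10_sqrt hp (2 * k + 1) (by omega) t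
    set s₀ : ℤ_[p] := 1 + (p : ℤ_[p]) ^ (2 * k + 1) * c with hs₀
    set s : E := algebraMap ℚ_[p] E ((s₀ : ℚ_[p])) with hs
    have hpE : algebraMap ℚ_[p] E (((p : ℤ_[p]) : ℚ_[p])) = pE p E := by
      rw [PadicInt.coe_natCast]; rfl
    have hN : A * conj A = algebraMap ℚ_[p] E ((s₀ * s₀ : ℤ_[p]) : ℚ_[p]) := by
      rw [hc]
      simp only [PadicInt.coe_add, PadicInt.coe_mul, PadicInt.coe_one, PadicInt.coe_pow,
        _root_.map_add, _root_.map_mul, _root_.map_one, _root_.map_pow, hpE]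
      linear_combination hdet' + pE p E * hBB
    have hss : s * s = A * conj A := by
      rw [hN, hs, PadicInt.coe_mul, _root_.map_mul]
    have hsmall : ‖(p : ℤ_[p]) ^ (2 * k + 1) * c‖ < 1 := by
      rw [norm_mul]
      have h1 : ‖(p : ℤ_[p]) ^ (2 * k + 1)‖ * ‖c‖ ≤ (p : ℝ) ^ (-(2 * k + 1 : ℕ) : ℤ) := by
        calc ‖(p : ℤ_[p]) ^ (2 * k + 1)‖ * ‖c‖ ≤ ‖(p : ℤ_[p]) ^ (2 * k + 1)‖ * 1 :=
              mul_le_mul_of_nonneg_left (PadicInt.norm_le_one c) (norm_nonneg _)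
          _ = (p : ℝ) ^ (-(2 * k + 1 : ℕ) : ℤ) := by rw [mul_one, PadicInt.norm_p_pow]
      refine lt_of_le_of_lt h1 ?_
      have hp1 : (1 : ℝ) < p := by exact_mod_cast (Fact.out : p.Prime).one_lt
      exact zpow_lt_one_of_neg₀ hp1 (by omega)
    have hs₀u : IsUnit s₀ := by
      rw [PadicInt.isUnit_iff, hs₀,
        PadicInt.norm_add_eq_max_of_ne (by rw [norm_one]; exact ne_of_gt hsmall), norm_one]
      exact max_eq_left (le_of_lt hsmall)
    obtain ⟨s₀u, hs₀u'⟩ := hs₀u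
    set t₀ : ℤ_[p] := ((s₀u⁻¹ : ℤ_[p]ˣ) : ℤ_[p]) with ht₀def
    have ht₀ : s₀ * t₀ = 1 := by
      rw [← hs₀u', ht₀def]
      exact_mod_cast s₀u.mul_inv
    set si : E := algebraMap ℚ_[p] E (t₀ : ℚ_[p]) with hsi
    have hssi : s * si = 1 := by
      rw [hs, hsi, ← _root_.map_mul, ← PadicInt.coe_mul, ht₀]
      simp
    have hconjs : conj s = s := by rw [hs]; exact AlgHom.commutes conj _
    have hconjsi : conj si = si := by rw [hsi]; exact AlgHom.commutes conj _
    set lam : E := A * si with hlam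
    have hconjlam : conj lam = conj A * si := by rw [hlam, _root_.map_mul, hconjsi]
    have hl1 : lam * conj lam = 1 := by
      rw [hlam, hconjlam]
      linear_combination (-(si * si)) * hss + (s * si + 1) * hssi
    have hAO : A ∈ OE p E α :=
      St10.OE_add (St10.OE_mul hα (St10.OE_pE_pow k) ha) St10.OE_one
    have hlamO : lam ∈ OE p E α := St10.OE_mul hα hAO (St10.OE_map t₀)
    set g := qmat p E (⇑conj) s (conj lam * B) with hg
    have hgD : g ∈ D1set p E (⇑conj) := by
      refine ⟨⟨s, conj lam * B, rfl⟩, ?_⟩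
      have hcc : conj (conj lam * B) = lam * conj B := by
        rw [_root_.map_mul conj (conj lam) B, hinv]
      rw [hg, St10.det_qmat, hconjs, hcc]
      linear_combination hss + hdet' - (pE p E * (B * conj B)) * hl1
    have hb'conj : conj (algebraMap ℚ_[p] E (((p : ℤ_[p]) ^ k * c : ℤ_[p]) : ℚ_[p]))
        = algebraMap ℚ_[p] E (((p : ℤ_[p]) ^ k * c : ℤ_[p]) : ℚ_[p]) :=
      AlgHom.commutes conj _
    have hgv : vDge p E α (⇑conj) (2 * k + 1) (g - 1) := by
      refine ⟨qmat p E (⇑conj) (conj (conj lam * b))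
        (algebraMap ℚ_[p] E (((p : ℤ_[p]) ^ k * c : ℤ_[p]) : ℚ_[p])),
        ⟨_, _, St10.OE_conj conj hconj
          (St10.OE_mul hα (St10.OE_conj conj hconj hlamO) hb), St10.OE_map _, rfl⟩, ?_⟩
      rw [pow_succ, mul_assoc, St10.delta_mul_qmat conj hinv, St10.delta_pow_even,
        smul_mul_assoc, one_mul, St10.smul_qmat conj hconjπ]
      have e1 : s - 1 = π * (pE p E * conj (algebraMap ℚ_[p] E
          (((p : ℤ_[p]) ^ k * c : ℤ_[p]) : ℚ_[p]))) := by
        rw [hb'conj, hs, hs₀, hπ]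
        simp only [PadicInt.coe_add, PadicInt.coe_mul, PadicInt.coe_pow, PadicInt.coe_one,
          _root_.map_add, _root_.map_mul, _root_.map_pow, _root_.map_one, hpE]
        ring
      have e2 : conj lam * B = π * conj (conj (conj lam * b)) := by
        rw [hinv, hB]
        ring
      rw [hg, St10.qmat_sub_one, e1, e2]
    refine ⟨lam, hl1, g, hgD, hgv, 1, h1D, h0OD _, ?_⟩
    have e3 : lam * s = A := by rw [hlam]; linear_combination A * hssi
    have e4 : lam * (conj lam * B) = B := by linear_combination B * hl1
    rw [mul_one, hg, St10.qmat0_mul, e3, e4, hy']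
  refine ⟨hmain, ?_, ?_⟩
  · intro lam0 hlam0 h hh hv
    obtain ⟨lam, hl, g, hgD, hgv, u, huD, huv, heq⟩ := hmain h hh hv
    refine ⟨lam0 * lam, ?_, g, hgD, hgv, u, huD, huv, ?_⟩
    · rw [_root_.map_mul]
      linear_combination (lam * conj lam) * hlam0 + hl
    · rw [heq, ← mul_assoc, ← mul_assoc, St10.qmat0_mul, mul_zero]
  · intro lam0 hlam0 g hgD hgv
    refine ⟨lam0, hlam0, g, hgD, ?_, 1, h1D, h0OD _, (mul_one _).symm⟩
    obtain ⟨yy, ⟨a, b, ha, hb, rfl⟩, hyv⟩ := hgv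
    refine ⟨qmat p E (⇑conj) (pE p E * conj b) (conj a),
      ⟨_, _, St10.OE_mul hα hpEO (St10.OE_conj conj hconj hb),
        St10.OE_conj conj hconj ha, rfl⟩, ?_⟩
    rw [hyv, pow_succ, mul_assoc, St10.delta_mul_qmat conj hinv]
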